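/- In the setting of the previous lemma, one has χ(L) ∩ ρ(M') = (χ∘φ)(M) inside L'. -/

import Mathlib

/-- In the setting of the previous lemma, `χ(L) ∩ ρ(M') = (χ∘φ)(M)` inside `L'`. -/
theorem stmt_7 {M M' L L' : Type*} [AddCommGroup M] [AddCommGroup M']
    [AddCommGroup L] [AddCommGroup L']
    (φ : M →+ L) (ψ : M →+ M') (ρ : M' →+ L') (χ : L →+ L')
    (hcomm : χ.comp φ = ρ.comp ψ)
    (hχ : Function.Injective χ) (hρ : Function.Injective ρ)
    (htf : ∀ g : L ⧸ φ.range, g ≠ 0 → ¬IsOfFinAddOrder g)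
    (ht : AddMonoid.IsTorsion (M' ⧸ ψ.range)) :
    χ.range ⊓ ρ.range = (χ.comp φ).range := by
  apply le_antisymm
  · rintro x ⟨⟨l, hl⟩, ⟨m', hm'⟩⟩
    -- torsion: ∃ n > 0, n • m' ∈ ψ.range
    obtain ⟨n, hn, hnm⟩ := (ht (QuotientAddGroup.mk m')).exists_nsmul_eq_zero
    rw [← QuotientAddGroup.mk_nsmul, QuotientAddGroup.eq_zero_iff] at hnm
    obtain ⟨m, hm⟩ := hnm
    -- n • l = φ m
    have h1 : χ (n • l) = χ (φ m) := by
      have hc := DFunLike.congr_fun hcomm m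
      simp only [AddMonoidHom.comp_apply] at hc
      rw [hc, hm, map_nsmul, map_nsmul, hm', hl]

    have h2 : n • l = φ m := hχ h1
    -- torsion-free ⇒ l ∈ φ.range
    have h3 : (n : ℕ) • (QuotientAddGroup.mk l : L ⧸ φ.range) = 0 := by
      rw [← QuotientAddGroup.mk_nsmul, QuotientAddGroup.eq_zero_iff, h2]
      exact ⟨m, rfl⟩
    have h4 : (QuotientAddGroup.mk l : L ⧸ φ.range) = 0 := by
      by_contra h
      exact htf _ h (isOfFinAddOrder_iff_nsmul_eq_zero.mpr ⟨n, hn, h3⟩)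
    rw [QuotientAddGroup.eq_zero_iff] at h4
    obtain ⟨m₀, hm₀⟩ := h4
    exact ⟨m₀, by simp [hm₀, hl]⟩
  · rintro x ⟨m, rfl⟩
    refine ⟨⟨φ m, rfl⟩, ⟨ψ m, ?_⟩⟩
    exact (DFunLike.congr_fun hcomm m).symm
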